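/- Let A be the space of Laurent series K((z)) extended by a formal symbol log z (i.e., A = K((z)) ⊕ K·log z as a K-vector space), with derivation d sending f(z) + a·log z to (f'(z) + a/z) dz, and residue map Res on Ω¹ = K((z))dz picking the coefficient of dz/z. Then there exists a unique antisymmetric K-bilinear form ⟨ , ⟩ : A × A → K such that ⟨F, G⟩ = Res(F dG) whenever Res(dF) = 0. -/

import Mathlib

noncomputable section

variable (K : Type*) [Field K]

/-- Formal derivative of a Laurent series. -/
def lderiv (f : LaurentSeries K) : LaurentSeries K where
  coeff n := ((n + 1 : ℤ) : K) * f.coeff (n + 1)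
  isPWO_support' := by
    apply Set.IsPWO.mono (f.isPWO_support.image_of_monotone
      (f := fun n : ℤ => n - 1) (fun a b h => by dsimp; omega))
    intro n hn
    simp only [Function.mem_support] at hn
    refine ⟨n + 1, fun h => hn ?_, by ring⟩
    simp [h]

/-- The differential on `A = K((z)) ⊕ K·log z`. -/
def dA (F : LaurentSeries K × K) : LaurentSeries K :=
  lderiv K F.1 + F.2 • (HahnSeries.single (-1 : ℤ) (1 : K))

/-- The residue: coefficient of `dz/z`. -/
def Res (ω : LaurentSeries K) : K := ω.coeff (-1)

end

section Aux

variable (K : Type*) [Field K]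

@[simp] lemma lderiv_coeff (f : LaurentSeries K) (n : ℤ) :
    (lderiv K f).coeff n = ((n + 1 : ℤ) : K) * f.coeff (n + 1) := rfl

lemma lderiv_add (f g : LaurentSeries K) :
    lderiv K (f + g) = lderiv K f + lderiv K g := by
  ext n
  simp [mul_add]

lemma lderiv_smul (c : K) (f : LaurentSeries K) :
    lderiv K (c • f) = c • lderiv K f := by
  ext n
  simp [lderiv]
  ring

lemma lderiv_supp_pwo (f : LaurentSeries K) :
    ((fun n : ℤ => n - 1) '' f.support).IsPWO :=
  f.isPWO_support.image_of_monotone (fun a b h => sub_le_sub_right h 1)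

lemma lderiv_supp_subset (f : LaurentSeries K) :
    (lderiv K f).support ⊆ (fun n : ℤ => n - 1) '' f.support := by
  intro n hn
  have hn' : (lderiv K f).coeff n ≠ 0 := hn
  rw [lderiv_coeff] at hn'
  have hf : f.coeff (n + 1) ≠ 0 := fun h => hn' (by rw [h, mul_zero])
  exact ⟨n + 1, hf, by ring⟩

lemma res_lderiv (f : LaurentSeries K) : Res K (lderiv K f) = 0 := by
  simp [Res]

/-- Key computation: `Res(f dg) + Res(g df) = 0`. -/
lemma res_leibniz (f g : LaurentSeries K) :
    Res K (f * lderiv K g) + Res K (lderiv K f * g) = 0 := by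
  unfold Res
  rw [HahnSeries.coeff_mul_right' (lderiv_supp_pwo K g) (lderiv_supp_subset K g),
    HahnSeries.coeff_mul_left' (lderiv_supp_pwo K f) (lderiv_supp_subset K f)]
  rw [show (∑ ij ∈ Finset.antidiagonal (lderiv_supp_pwo K f) g.isPWO_support (-1),
      (lderiv K f).coeff ij.1 * g.coeff ij.2)
    = ∑ ij ∈ Finset.antidiagonal f.isPWO_support (lderiv_supp_pwo K g) (-1),
      (lderiv K f).coeff (ij.1 - 1) * g.coeff (ij.2 + 1) from ?_]
  · rw [← Finset.sum_add_distrib]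
    apply Finset.sum_eq_zero
    rintro ⟨i, j⟩ hij
    simp only [Finset.mem_addAntidiagonal] at hij
    simp only [lderiv_coeff]
    have h1 : ((i - 1 : ℤ) + 1 : ℤ) = i := by ring
    rw [h1]
    have hij2 : (i : ℤ) = -(j + 1) := by
      have := hij.2.2
      omega
    rw [hij2]
    push_cast
    ring
  · refine (Finset.sum_nbij' (fun ij : ℤ × ℤ => (ij.1 - 1, ij.2 + 1))
      (fun ij : ℤ × ℤ => (ij.1 + 1, ij.2 - 1)) ?_ ?_ ?_ ?_ ?_).symm
    · rintro ⟨i, j⟩ hij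
      simp only [Finset.mem_addAntidiagonal, Set.mem_image, Function.mem_support] at hij ⊢
      obtain ⟨hi, ⟨j', hj', hj⟩, hs⟩ := hij
      refine ⟨⟨i, hi, rfl⟩, ?_, by omega⟩
      have : j + 1 = j' := by omega
      rw [this]; exact hj'
    · rintro ⟨i, j⟩ hij
      simp only [Finset.mem_addAntidiagonal, Set.mem_image, Function.mem_support] at hij ⊢
      obtain ⟨⟨i', hi', hi⟩, hj, hs⟩ := hij
      refine ⟨?_, ⟨j, hj, rfl⟩, by omega⟩
      have : i + 1 = i' := by omega
      rw [this]; exact hi'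
    · rintro ⟨i, j⟩ _
      simp only [Prod.mk.injEq]
      constructor <;> ring
    · rintro ⟨i, j⟩ _
      simp only [Prod.mk.injEq]
      constructor <;> ring
    · rintro ⟨i, j⟩ _
      rfl

lemma res_mul_single (f : LaurentSeries K) :
    Res K (f * HahnSeries.single (-1 : ℤ) (1 : K)) = f.coeff 0 := by
  have := HahnSeries.coeff_mul_single_add (r := (1 : K)) (x := f) (a := (0 : ℤ)) (b := (-1 : ℤ))
  simpa [Res] using this

lemma res_dA (F : LaurentSeries K × K) : Res K (dA K F) = F.2 := by
  unfold dA Res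
  simp [HahnSeries.coeff_add]

lemma dA_add (G G' : LaurentSeries K × K) : dA K (G + G') = dA K G + dA K G' := by
  unfold dA
  simp only [Prod.fst_add, Prod.snd_add, lderiv_add, add_smul]
  abel

lemma dA_smul (c : K) (G : LaurentSeries K × K) : dA K (c • G) = c • dA K G := by
  unfold dA
  simp only [Prod.smul_fst, Prod.smul_snd, lderiv_smul, smul_add, smul_smul, smul_eq_mul]

lemma hs_smul_mul (c : K) (f w : LaurentSeries K) : (c • f) * w = c • (f * w) := by
  rw [← HahnSeries.single_zero_mul_eq_smul, ← HahnSeries.single_zero_mul_eq_smul, mul_assoc]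

lemma hs_mul_smul (c : K) (f w : LaurentSeries K) : f * (c • w) = c • (f * w) := by
  rw [← HahnSeries.single_zero_mul_eq_smul, ← HahnSeries.single_zero_mul_eq_smul,
    mul_left_comm]

/-- The double-index bilinear form. -/
noncomputable def dblB : (LaurentSeries K × K) →ₗ[K] (LaurentSeries K × K) →ₗ[K] K :=
  LinearMap.mk₂ K
    (fun F G => Res K (F.1 * dA K G) - F.2 * G.1.coeff 0)
    (by
      intro F F' G
      simp only [Prod.fst_add, Prod.snd_add, add_mul, Res]
      rw [HahnSeries.coeff_add]
      ring)
    (by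
      intro c F G
      simp only [Prod.smul_fst, Prod.smul_snd, smul_eq_mul, Res]
      rw [hs_smul_mul, HahnSeries.coeff_smul]
      simp only [smul_eq_mul]
      ring)
    (by
      intro F G G'
      simp only [Prod.fst_add, Prod.snd_add, Res]
      rw [dA_add, mul_add, HahnSeries.coeff_add, HahnSeries.coeff_add]
      ring)
    (by
      intro c G G'
      simp only [Prod.smul_fst, Prod.smul_snd, smul_eq_mul, Res]
      rw [dA_smul, hs_mul_smul, HahnSeries.coeff_smul, HahnSeries.coeff_smul]
      simp only [smul_eq_mul]
      ring)

lemma dblB_apply (F G : LaurentSeries K × K) :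
    dblB K F G = Res K (F.1 * dA K G) - F.2 * G.1.coeff 0 := rfl

lemma res_mul_dA (f : LaurentSeries K) (G : LaurentSeries K × K) :
    Res K (f * dA K G) = Res K (f * lderiv K G.1) + G.2 * f.coeff 0 := by
  unfold dA
  rw [mul_add, hs_mul_smul]
  unfold Res
  rw [HahnSeries.coeff_add, HahnSeries.coeff_smul, smul_eq_mul]
  congr 1
  rw [show (f * HahnSeries.single (-1 : ℤ) (1 : K)).coeff (-1) = f.coeff 0 from
    res_mul_single K f]

lemma dA_log : dA K ((0 : LaurentSeries K), (1 : K)) = HahnSeries.single (-1 : ℤ) (1 : K) := by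
  unfold dA
  have h0 : lderiv K (0 : LaurentSeries K) = 0 := by ext n; simp [lderiv]
  simp [h0]

end Aux

/-- existence and uniqueness of the double index on
`A = K((z)) ⊕ K·log z`: the unique antisymmetric bilinear form with
`⟨F,G⟩ = Res(F dG)` whenever `Res(dF) = 0`. -/
theorem stmt4 (K : Type*) [Field K] [CharZero K] :
    ∃! B : (LaurentSeries K × K) →ₗ[K] (LaurentSeries K × K) →ₗ[K] K,
      (∀ F G : LaurentSeries K × K, B F G = - B G F) ∧
      (∀ F G : LaurentSeries K × K, Res K (dA K F) = 0 →
        B F G = Res K (F.1 * dA K G)) := by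
  refine ⟨dblB K, ⟨?_, ?_⟩, ?_⟩
  · intro F G
    rw [dblB_apply, dblB_apply, res_mul_dA, res_mul_dA]
    have h := res_leibniz K F.1 G.1
    have hc : Res K (lderiv K F.1 * G.1) = Res K (G.1 * lderiv K F.1) := by
      rw [mul_comm]
    rw [hc] at h
    linear_combination h
  · intro F G hF
    rw [res_dA] at hF
    rw [dblB_apply, hF, zero_mul, sub_zero]
  · intro B' ⟨hanti, hres⟩
    apply LinearMap.ext; intro F
    apply LinearMap.ext; intro G
    have hF : ((F.1, (0 : K)) : LaurentSeries K × K)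
        + F.2 • ((0 : LaurentSeries K), (1 : K)) = F := by
      apply Prod.ext <;> simp
    have hG : ((G.1, (0 : K)) : LaurentSeries K × K)
        + G.2 • ((0 : LaurentSeries K), (1 : K)) = G := by
      apply Prod.ext <;> simp
    have h1 : ∀ f : LaurentSeries K, ∀ H, B' (f, (0 : K)) H = Res K (f * dA K H) :=
      fun f H => hres (f, 0) H (by rw [res_dA])
    have hlog : B' ((0 : LaurentSeries K), (1 : K)) ((0 : LaurentSeries K), (1 : K)) = 0 := by
      have h := hanti ((0 : LaurentSeries K), (1 : K)) ((0 : LaurentSeries K), (1 : K))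
      have h2 : B' ((0 : LaurentSeries K), (1 : K)) ((0 : LaurentSeries K), (1 : K))
          + B' ((0 : LaurentSeries K), (1 : K)) ((0 : LaurentSeries K), (1 : K)) = 0 := by
        linear_combination h
      exact add_self_eq_zero.mp h2
    have h2' : B' G ((0 : LaurentSeries K), (1 : K)) = G.1.coeff 0 := by
      conv_lhs => rw [← hG]
      simp only [map_add, map_smul, LinearMap.add_apply, LinearMap.smul_apply, smul_eq_mul]
      rw [h1 G.1 ((0 : LaurentSeries K), (1 : K)), hlog, mul_zero, add_zero, dA_log,
        res_mul_single]
    have h2 : B' ((0 : LaurentSeries K), (1 : K)) G = - G.1.coeff 0 := by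
      rw [hanti, h2']
    have hsplit : B' F G = B' (F.1, (0 : K)) G
        + F.2 * B' ((0 : LaurentSeries K), (1 : K)) G := by
      conv_lhs => rw [← hF]
      simp only [map_add, map_smul, LinearMap.add_apply, LinearMap.smul_apply, smul_eq_mul]
    rw [hsplit, h1, h2, dblB_apply]
    ring
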